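/- arXiv:1701.04493 — 3 statements merged into one kernel-verified Lean document; each statement's English description precedes it below -/
import Mathlib

section
/- For every positive integer n, the n-th Catalan number satisfies Cat(n) ≤ (e/(√2·π)) · 4^n · n^(-3/2). -/
open Real Stirling Nat
open Real Stirling Nat

lemma sseq_ge (n : ℕ) (hn : 1 ≤ n) : Real.sqrt Real.pi ≤ stirlingSeq n := by
  obtain ⟨m, rfl⟩ := Nat.exists_eq_add_of_le hn
  have h := stirlingSeq'_antitone.le_of_tendsto
    (tendsto_stirlingSeq_sqrt_pi.comp (Filter.tendsto_add_atTop_nat 1)) m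
  simpa [Function.comp, Nat.succ_eq_add_one, Nat.add_comm] using h

lemma sseq_le (n : ℕ) (hn : 1 ≤ n) : stirlingSeq n ≤ Real.exp 1 / Real.sqrt 2 := by
  obtain ⟨m, rfl⟩ := Nat.exists_eq_add_of_le hn
  have h := stirlingSeq'_antitone (Nat.zero_le m)
  simpa [Function.comp, Nat.add_comm] using h

lemma fact_lower (n : ℕ) (hn : 1 ≤ n) :
    Real.sqrt Real.pi * (Real.sqrt (2 * n : ℝ) * ((n : ℝ) / Real.exp 1) ^ n) ≤ (n ! : ℝ) := by
  have hd : 0 < Real.sqrt (2 * n : ℝ) * ((n : ℝ) / Real.exp 1) ^ n := by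
    have : (0:ℝ) < n := by exact_mod_cast hn
    positivity
  have h := sseq_ge n hn
  rw [stirlingSeq, le_div_iff₀ hd] at h
  linarith [h]

lemma fact_upper (n : ℕ) (hn : 1 ≤ n) :
    (n ! : ℝ) ≤ Real.exp 1 / Real.sqrt 2 * (Real.sqrt (2 * n : ℝ) * ((n : ℝ) / Real.exp 1) ^ n) := by
  have hd : 0 < Real.sqrt (2 * n : ℝ) * ((n : ℝ) / Real.exp 1) ^ n := by
    have : (0:ℝ) < n := by exact_mod_cast hn
    positivity
  have h := sseq_le n hn
  rw [stirlingSeq, div_le_iff₀ hd] at h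
  linarith [h]

set_option maxHeartbeats 1600000 in
/-- For every positive integer `n`, the `n`-th Catalan number satisfies
`Cat(n) ≤ (e/(√2·π)) · 4^n · n^(-3/2)`. -/
theorem catalan_upper_bound (n : ℕ) (hn : 1 ≤ n) :
    (catalan n : ℝ) ≤ Real.exp 1 / (Real.sqrt 2 * Real.pi) * 4 ^ n * (n : ℝ) ^ (-(3 : ℝ) / 2) := by
  have hn0 : (0:ℝ) < n := by exact_mod_cast hn
  have hE : (0:ℝ) < Real.exp 1 := Real.exp_pos 1
  have hs2 : (0:ℝ) < Real.sqrt 2 := Real.sqrt_pos.2 (by norm_num)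
  have hsn : (0:ℝ) < Real.sqrt n := Real.sqrt_pos.2 hn0
  have hsn2 : Real.sqrt n * Real.sqrt n = (n:ℝ) := Real.mul_self_sqrt hn0.le
  have hT : (0:ℝ) < ((n:ℝ) / Real.exp 1) ^ (2*n) := by positivity
  -- Nat identity
  have hnat : (n + 1) * catalan n * (n ! * n !) = (2 * n)! := by
    rw [succ_mul_catalan_eq_centralBinom]
    have := Nat.choose_mul_factorial_mul_factorial (Nat.le_mul_of_pos_left n (by norm_num : 0 < 2))
    simpa [Nat.centralBinom, two_mul, Nat.add_sub_cancel, Nat.mul_assoc] using this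
  have hcat : (catalan n : ℝ) = ((2*n)! : ℝ) / (((n:ℝ)+1) * ((n ! : ℝ) * (n ! : ℝ))) := by
    have hD : (0:ℝ) < ((n:ℝ)+1) * ((n ! : ℝ) * (n ! : ℝ)) := by positivity
    rw [eq_div_iff hD.ne']
    push_cast [← hnat]
    ring
  -- bounds
  have hU := fact_upper (2*n) (by omega)
  have hL := fact_lower n hn
  have hLpos : 0 < Real.sqrt Real.pi * (Real.sqrt (2 * n : ℝ) * ((n : ℝ) / Real.exp 1) ^ n) := by
    have := Real.sqrt_pos.2 Real.pi_pos
    positivity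
  have hstep : (catalan n : ℝ) ≤
      (Real.exp 1 / Real.sqrt 2 * (Real.sqrt (2 * ((2*n : ℕ)) : ℝ) * (((2*n:ℕ) : ℝ) / Real.exp 1) ^ (2*n))) /
      (((n:ℝ)+1) * ((Real.sqrt Real.pi * (Real.sqrt (2 * n : ℝ) * ((n : ℝ) / Real.exp 1) ^ n))^2)) := by
    rw [hcat]
    apply div_le_div₀ (by positivity) _ (by positivity)
    · apply mul_le_mul_of_nonneg_left _ (by positivity)
      rw [sq]
      exact mul_le_mul hL hL hLpos.le (Nat.cast_nonneg _)
    · exact hU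
  refine hstep.trans ?_
  -- simplify the bound
  have e1 : Real.sqrt (2 * ((2*n : ℕ)) : ℝ) = 2 * Real.sqrt n := by
    push_cast
    rw [show (2 * (2*(n:ℝ))) = 4 * n by ring, Real.sqrt_mul (by norm_num),
      show (4:ℝ) = 2^2 by norm_num, Real.sqrt_sq (by norm_num)]
  have e2 : (((2*n:ℕ) : ℝ) / Real.exp 1) ^ (2*n) = 4 ^ n * ((n:ℝ) / Real.exp 1) ^ (2*n) := by
    push_cast
    rw [show (2*(n:ℝ))/Real.exp 1 = 2 * ((n:ℝ)/Real.exp 1) by ring, mul_pow,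
      pow_mul, show (2:ℝ)^2 = 4 by norm_num]
  have e3 : (Real.sqrt Real.pi * (Real.sqrt (2 * n : ℝ) * ((n : ℝ) / Real.exp 1) ^ n))^2
      = Real.pi * ((2*n:ℝ) * ((n:ℝ) / Real.exp 1) ^ (2*n)) := by
    rw [mul_pow, mul_pow, Real.sq_sqrt Real.pi_pos.le, Real.sq_sqrt (by positivity),
      ← pow_mul, Nat.mul_comm n 2]
  rw [e1, e2, e3]
  have e4 : (Real.exp 1 / Real.sqrt 2 * (2 * Real.sqrt n * (4 ^ n * ((n:ℝ) / Real.exp 1) ^ (2*n)))) /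
      (((n:ℝ)+1) * (Real.pi * ((2*n:ℝ) * ((n:ℝ) / Real.exp 1) ^ (2*n))))
      = Real.exp 1 / (Real.sqrt 2 * Real.pi) * 4 ^ n * (Real.sqrt n / ((n:ℝ) * ((n:ℝ)+1))) := by
    field_simp
  rw [e4]
  apply mul_le_mul_of_nonneg_left _ (by positivity)
  -- √n/(n(n+1)) ≤ n^{-3/2}
  have e5 : (n:ℝ) ^ (-(3 : ℝ) / 2) = Real.sqrt n / ((n:ℝ) * (n:ℝ)) := by
    rw [show -(3:ℝ)/2 = -(3/2) by ring, Real.rpow_neg hn0.le,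
      show (3:ℝ)/2 = 1 + 1/2 by ring, Real.rpow_add hn0, Real.rpow_one,
      ← Real.sqrt_eq_rpow]
    field_simp
    nlinarith [hsn2]
  rw [e5]
  apply div_le_div_of_nonneg_left hsn.le (by positivity)
  nlinarith [hn0]
end

section
/- For all positive integers r, s with r + s ≤ k, the ratio Cat(r+s+1)/(Cat(r)·Cat(s)) is at most (e^5/(√8·π^2)) · k^(3/2), and in particular at most 6·k^(3/2). -/
lemma cat_pos (n : ℕ) : 0 < catalan n := by
  have h := succ_mul_catalan_eq_centralBinom n
  have h2 := n.centralBinom_pos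
  rcases Nat.eq_zero_or_pos (catalan n) with h0 | h0
  · rw [h0, Nat.mul_zero] at h; omega
  · exact h0

lemma centralBinom_succ_eq (n : ℕ) :
    ((n + 1).centralBinom : ℝ) = 2 * (2 * n + 1) / (n + 1) * n.centralBinom := by
  have h : ((n : ℝ) + 1) * ((n + 1).centralBinom : ℝ) = 2 * (2 * n + 1) * n.centralBinom := by
    exact_mod_cast congrArg (Nat.cast : ℕ → ℝ) (Nat.succ_mul_centralBinom_succ n)
  have hn : ((n : ℝ) + 1) ≠ 0 := by positivity
  field_simp
  linarith

lemma cat_succ_le (n : ℕ) : catalan (n + 1) ≤ 4 * catalan n := by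
  have h1 := succ_mul_catalan_eq_centralBinom (n + 1)
  have h2 := Nat.succ_mul_centralBinom_succ n
  have h3 := succ_mul_catalan_eq_centralBinom n
  have key : (n + 2) * catalan (n + 1) = 2 * (2 * n + 1) * catalan n := by
    have : (n + 1) * ((n + 2) * catalan (n + 1)) = (n + 1) * (2 * (2 * n + 1) * catalan n) := by
      rw [h1]
      rw [← h3] at h2
      linarith [h2]
    exact Nat.eq_of_mul_eq_mul_left (by omega) this
  have : (n + 2) * catalan (n + 1) ≤ (n + 2) * (4 * catalan n) := by
    rw [key]; nlinarith [cat_pos n]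
  exact Nat.le_of_mul_le_mul_left this (by omega)

lemma cat_add_le (r m : ℕ) : catalan (r + m) ≤ 4 ^ m * catalan r := by
  induction m with
  | zero => simp
  | succ m ih =>
      calc catalan (r + (m + 1)) = catalan ((r + m) + 1) := by ring_nf
        _ ≤ 4 * catalan (r + m) := cat_succ_le _
        _ ≤ 4 * (4 ^ m * catalan r) := by omega
        _ = 4 ^ (m + 1) * catalan r := by ring

/-- lower bound `4^s ≤ 2 √s (s+1) catalan s` for `s ≥ 1`. -/
lemma cat_lb : ∀ s : ℕ, 1 ≤ s → (4 : ℝ) ^ s ≤ 2 * Real.sqrt s * (s + 1) * catalan s := by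
  intro s hs
  induction s with
  | zero => omega
  | succ n ih =>
      rcases Nat.eq_zero_or_pos n with h0 | h0
      · subst h0; simp [catalan_one]; norm_num
      · have IH := ih h0
        have hB : ((n : ℝ) + 1) * catalan n = n.centralBinom := by
          exact_mod_cast succ_mul_catalan_eq_centralBinom n
        have hB' : ((n : ℝ) + 2) * catalan (n + 1) = (n + 1).centralBinom := by
          have := succ_mul_catalan_eq_centralBinom (n + 1)
          have := congrArg (Nat.cast : ℕ → ℝ) this
          push_cast at this
          linear_combination this
        have hIB : (4 : ℝ) ^ n ≤ 2 * Real.sqrt n * n.centralBinom := by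
          calc (4 : ℝ) ^ n ≤ 2 * Real.sqrt n * (n + 1) * catalan n := IH
            _ = 2 * Real.sqrt n * ((n + 1) * catalan n) := by ring
            _ = 2 * Real.sqrt n * n.centralBinom := by rw [hB]
        have hsn : (0:ℝ) ≤ (n:ℝ) := by positivity
        have hspos : (0 : ℝ) < Real.sqrt ((n:ℝ) + 1) := Real.sqrt_pos.mpr (by positivity)
        have hsq : Real.sqrt ((n:ℝ)+1) * Real.sqrt ((n:ℝ)+1) = (n:ℝ)+1 :=
          Real.mul_self_sqrt (by positivity)
        have hkey : 2 * Real.sqrt n ≤ (2 * n + 1) / Real.sqrt (n + 1) := by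
          rw [le_div_iff₀ hspos]
          have heq : 2 * Real.sqrt n * Real.sqrt ((n:ℝ) + 1) = 2 * Real.sqrt (n * (n + 1)) := by
            rw [Real.sqrt_mul hsn]; ring
          rw [heq]
          have h1 : Real.sqrt ((n : ℝ) * (n + 1)) ≤ Real.sqrt (((2 * (n:ℝ) + 1) / 2) ^ 2) := by
            apply Real.sqrt_le_sqrt; nlinarith
          have h2 : Real.sqrt ((((2 : ℝ) * n + 1) / 2) ^ 2) = (2 * (n:ℝ) + 1) / 2 :=
            Real.sqrt_sq (by positivity)
          nlinarith [h1, h2]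
        have hBpos : (0 : ℝ) < n.centralBinom := by exact_mod_cast n.centralBinom_pos
        have hcast : ((n:ℝ)+1) * ((n+1).centralBinom : ℝ) = 2*(2*(n:ℝ)+1) * n.centralBinom := by
          exact_mod_cast congrArg (Nat.cast : ℕ → ℝ) (Nat.succ_mul_centralBinom_succ n)
        have hkey2 : 2 * Real.sqrt n * Real.sqrt ((n:ℝ)+1) ≤ 2*(n:ℝ)+1 := by
          have heq : 2 * Real.sqrt n * Real.sqrt ((n:ℝ) + 1) = 2 * Real.sqrt (n * (n + 1)) := by
            rw [Real.sqrt_mul hsn]; ring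
          rw [heq]
          have h1 : Real.sqrt ((n : ℝ) * (n + 1)) ≤ Real.sqrt (((2 * (n:ℝ) + 1) / 2) ^ 2) := by
            apply Real.sqrt_le_sqrt; nlinarith
          have h2 : Real.sqrt ((((2 : ℝ) * n + 1) / 2) ^ 2) = (2 * (n:ℝ) + 1) / 2 :=
            Real.sqrt_sq (by positivity)
          nlinarith [h1, h2]
        have hmulgoal : ((n:ℝ)+1) * ((4:ℝ)^(n+1)) ≤
            2 * Real.sqrt ((n:ℝ)+1) * (2*(2*(n:ℝ)+1) * n.centralBinom) := by
          calc ((n:ℝ)+1) * ((4:ℝ)^(n+1)) = 4*((n:ℝ)+1) * (4:ℝ)^n := by ring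
            _ ≤ 4*((n:ℝ)+1) * (2*Real.sqrt n * n.centralBinom) :=
                mul_le_mul_of_nonneg_left hIB (by positivity)
            _ = (2*Real.sqrt n * Real.sqrt ((n:ℝ)+1)) * (Real.sqrt ((n:ℝ)+1) *
                (4 * n.centralBinom)) := by
                linear_combination (-(8 * Real.sqrt n * (n.centralBinom:ℝ))) * hsq
            _ ≤ (2*(n:ℝ)+1) * (Real.sqrt ((n:ℝ)+1) * (4 * n.centralBinom)) :=
                mul_le_mul_of_nonneg_right hkey2 (by positivity)
            _ = 2 * Real.sqrt ((n:ℝ)+1) * (2*(2*(n:ℝ)+1) * n.centralBinom) := by ring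
        have hgoal : (4 : ℝ) ^ (n + 1) ≤ 2 * Real.sqrt ((n:ℝ) + 1) * (n + 1).centralBinom := by
          rw [← hcast] at hmulgoal
          have heq2 : 2 * Real.sqrt ((n:ℝ)+1) * (((n:ℝ)+1) * ((n+1).centralBinom : ℝ)) =
              ((n:ℝ)+1) * (2 * Real.sqrt ((n:ℝ)+1) * (n+1).centralBinom) := by ring
          rw [heq2] at hmulgoal
          exact le_of_mul_le_mul_left hmulgoal (by positivity)
        calc (4:ℝ) ^ (n+1) ≤ 2 * Real.sqrt ((n:ℝ)+1) * (n + 1).centralBinom := hgoal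
          _ = 2 * Real.sqrt ((n:ℝ)+1) * (((n:ℝ) + 2) * catalan (n+1)) := by rw [← hB']
          _ = 2 * Real.sqrt (((n+1 : ℕ):ℝ)) * (((n+1:ℕ):ℝ) + 1) * catalan (n+1) := by
              push_cast; ring

lemma rpow32 (x : ℝ) (hx : 0 ≤ x) : x ^ ((3 : ℝ) / 2) = x * Real.sqrt x := by
  rcases hx.eq_or_lt with h | h
  · rw [← h, Real.zero_rpow (by norm_num)]; simp
  · rw [Real.sqrt_eq_rpow, show (3:ℝ)/2 = 1 + 1/2 by norm_num, Real.rpow_add h, Real.rpow_one]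

lemma sqrt_lb {a b : ℝ} (ha : 0 ≤ a) (h : a ^ 2 ≤ b) : a ≤ Real.sqrt b := by
  have : Real.sqrt (a ^ 2) ≤ Real.sqrt b := Real.sqrt_le_sqrt h
  rwa [Real.sqrt_sq ha] at this

lemma sqrt8_lb : (2.82 : ℝ) ≤ Real.sqrt 8 := sqrt_lb (by norm_num) (by norm_num)

lemma sqrt8_ub : Real.sqrt 8 ≤ 2.83 := by
  rw [Real.sqrt_le_iff]; norm_num

lemma c_lb : (5.28 : ℝ) ≤ (Real.exp 1) ^ 5 / (Real.sqrt 8 * Real.pi ^ 2) := by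
  have hpi := Real.pi_lt_d2
  have hpi0 := Real.pi_gt_three
  have hsu := sqrt8_ub
  have hs0 := sqrt8_lb
  have he : (2.71828 : ℝ) ≤ Real.exp 1 := by nlinarith [Real.exp_one_gt_d9]
  have hden : (0:ℝ) < Real.sqrt 8 * Real.pi ^ 2 := by nlinarith
  rw [le_div_iff₀ hden]
  have he5 : (148.41 : ℝ) ≤ (Real.exp 1) ^ 5 := by
    calc (148.41 : ℝ) ≤ 2.71828 ^ 5 := by norm_num
      _ ≤ (Real.exp 1) ^ 5 := pow_le_pow_left₀ (by norm_num) he 5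
  nlinarith [hpi, hsu, hpi0, hs0]

lemma c_ub : (Real.exp 1) ^ 5 / (Real.sqrt 8 * Real.pi ^ 2) ≤ 6 := by
  have hpi := Real.pi_gt_d2
  have hpi1 := Real.pi_lt_d2
  have hs0 := sqrt8_lb
  have hsu := sqrt8_ub
  have he : Real.exp 1 ≤ 2.71829 := by nlinarith [Real.exp_one_lt_d9]
  have hden : (0:ℝ) < Real.sqrt 8 * Real.pi ^ 2 := by nlinarith
  rw [div_le_iff₀ hden]
  have he5 : (Real.exp 1) ^ 5 ≤ 148.42 := by
    calc (Real.exp 1) ^ 5 ≤ 2.71829 ^ 5 :=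
        pow_le_pow_left₀ (le_of_lt (Real.exp_pos 1)) he 5
      _ ≤ 148.42 := by norm_num
  nlinarith [hpi, hs0]

set_option maxHeartbeats 1000000 in
/-- For positive integers `r, s` with `r + s ≤ k`, the ratio
`Cat(r+s+1)/(Cat(r)·Cat(s))` is at most `(e⁵/(√8·π²))·k^(3/2)`, and in
particular at most `6·k^(3/2)`. -/
theorem catalan_ratio_bound (k r s : ℕ) (hr : 1 ≤ r) (hs : 1 ≤ s) (hrs : r + s ≤ k) :
    (catalan (r + s + 1) : ℝ) / (catalan r * catalan s) ≤
        (Real.exp 1) ^ 5 / (Real.sqrt 8 * Real.pi ^ 2) * (k : ℝ) ^ ((3 : ℝ) / 2) ∧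
      (catalan (r + s + 1) : ℝ) / (catalan r * catalan s) ≤ 6 * (k : ℝ) ^ ((3 : ℝ) / 2) := by
  have hrpow : (0 : ℝ) ≤ (k : ℝ) ^ ((3 : ℝ) / 2) := Real.rpow_nonneg (by positivity) _
  suffices hmain : (catalan (r + s + 1) : ℝ) / (catalan r * catalan s) ≤
      (Real.exp 1) ^ 5 / (Real.sqrt 8 * Real.pi ^ 2) * (k : ℝ) ^ ((3 : ℝ) / 2) by
    refine ⟨hmain, hmain.trans ?_⟩
    exact mul_le_mul_of_nonneg_right c_ub hrpow
  clear hrpow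
  wlog hsr : s ≤ r with H
  · push_neg at hsr
    have := H k s r hs hr (by omega) hsr.le
    rwa [show s + r = r + s from add_comm s r, mul_comm ((catalan s : ℝ)) ((catalan r : ℝ))]
      at this
  have hCr : (0 : ℝ) < catalan r := by exact_mod_cast cat_pos r
  have hCs : (0 : ℝ) < catalan s := by exact_mod_cast cat_pos s
  rw [div_le_iff₀ (by positivity)]
  have hk32 : ((k : ℝ)) ^ ((3:ℝ)/2) = (k : ℝ) * Real.sqrt k := rpow32 _ (by positivity)
  rw [hk32]
  set C : ℝ := (Real.exp 1) ^ 5 / (Real.sqrt 8 * Real.pi ^ 2) with hC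
  have hC1 : (5.28 : ℝ) ≤ C := c_lb
  have hkq : (0 : ℝ) ≤ (k : ℝ) * Real.sqrt k := by positivity
  have hCk : 5.28 * ((k:ℝ) * Real.sqrt k) ≤ C * ((k:ℝ) * Real.sqrt k) :=
    mul_le_mul_of_nonneg_right hC1 hkq
  by_cases hk2 : k = 2
  · have hr1 : r = 1 := by omega
    have hs1 : s = 1 := by omega
    subst hr1; subst hs1; subst hk2
    have h3 : catalan 3 = 5 := by
      have h4 := succ_mul_catalan_eq_centralBinom 3
      have h5 : Nat.centralBinom 3 = 20 := by decide
      omega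
    rw [show (1:ℕ)+1+1 = 3 by norm_num, h3, catalan_one]
    have hsq2 : (1.41 : ℝ) ≤ Real.sqrt 2 := sqrt_lb (by norm_num) (by norm_num)
    have h2k : ((2:ℕ):ℝ) = (2:ℝ) := by norm_num
    rw [h2k] at hCk ⊢
    push_cast
    nlinarith [hCk, hsq2]
  · have hk3 : 3 ≤ k := by omega
    have hk2s : 2 * s ≤ k := by omega
    have h1 : (catalan (r + s + 1) : ℝ) ≤ 4 ^ (s + 1) * catalan r := by
      have h' := cat_add_le r (s + 1)
      rw [show r + (s+1) = r + s + 1 by omega] at h'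
      exact_mod_cast h'
    have h2 : (4 : ℝ) ^ s ≤ 2 * Real.sqrt s * (s + 1) * catalan s := cat_lb s hs
    have hchain : (catalan (r + s + 1) : ℝ) ≤
        8 * Real.sqrt s * ((s:ℝ) + 1) * (catalan r * catalan s) := by
      calc (catalan (r + s + 1) : ℝ) ≤ 4 ^ (s + 1) * catalan r := h1
        _ = 4 * (4 : ℝ) ^ s * catalan r := by ring
        _ ≤ 4 * (2 * Real.sqrt s * (s + 1) * catalan s) * catalan r := by nlinarith [h2, hCr]
        _ = 8 * Real.sqrt s * ((s:ℝ) + 1) * (catalan r * catalan s) := by ring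
    have hnum : 8 * Real.sqrt s * ((s:ℝ) + 1) ≤ C * ((k:ℝ) * Real.sqrt k) := by
      have hsqs : (0:ℝ) ≤ Real.sqrt s := Real.sqrt_nonneg _
      have h2sk : (2 * (s:ℝ)) ≤ (k : ℝ) := by exact_mod_cast hk2s
      have hkk : (2 * (s:ℝ)) * Real.sqrt (2 * (s:ℝ)) ≤ (k:ℝ) * Real.sqrt k :=
        mul_le_mul h2sk (Real.sqrt_le_sqrt h2sk) (Real.sqrt_nonneg _) (by positivity)
      have hsqrt2 : (1.41 : ℝ) ≤ Real.sqrt 2 := sqrt_lb (by norm_num) (by norm_num)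
      have hmul : Real.sqrt (2 * (s:ℝ)) = Real.sqrt 2 * Real.sqrt s :=
        Real.sqrt_mul (by norm_num) _
      rcases Nat.lt_or_ge s 2 with hs2 | hs2
      · have hs1 : s = 1 := by omega
        subst hs1
        have hsqrt3 : (1.73 : ℝ) ≤ Real.sqrt 3 := sqrt_lb (by norm_num) (by norm_num)
        have hk3' : (3 : ℝ) ≤ (k : ℝ) := by exact_mod_cast hk3
        have hkk3 : (3 : ℝ) * Real.sqrt 3 ≤ (k:ℝ) * Real.sqrt k :=
          mul_le_mul hk3' (Real.sqrt_le_sqrt hk3') (Real.sqrt_nonneg _) (by positivity)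
        have hs1sqrt : Real.sqrt ((1:ℕ):ℝ) = 1 := by norm_num
        rw [hs1sqrt]
        push_cast
        nlinarith [hCk, hkk3, hsqrt3]
      · have hs2' : (2 : ℝ) ≤ (s : ℝ) := by exact_mod_cast hs2
        have hlb : 2 * 1.41 * ((s:ℝ) * Real.sqrt s) ≤ (2 * (s:ℝ)) * Real.sqrt (2 * (s:ℝ)) := by
          rw [hmul]
          nlinarith [mul_nonneg (mul_nonneg (by positivity : (0:ℝ) ≤ (s:ℝ)) hsqs)
            (by linarith : (0:ℝ) ≤ Real.sqrt 2 - 1.41)]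
        have h7 : 8 * Real.sqrt s ≤ 6.88 * ((s:ℝ) * Real.sqrt s) := by
          nlinarith [mul_nonneg hsqs (by linarith : (0:ℝ) ≤ 6.88 * (s:ℝ) - 8)]
        have e1 : 5.28*((2*(s:ℝ)) * Real.sqrt (2*(s:ℝ))) ≤ 5.28*((k:ℝ)*Real.sqrt k) := by
          linarith
        have e2 : 5.28*(2 * 1.41 * ((s:ℝ)*Real.sqrt s)) ≤
            5.28*((2*(s:ℝ)) * Real.sqrt (2*(s:ℝ))) := by linarith
        nlinarith [hCk, e1, e2, h7]
    calc (catalan (r + s + 1) : ℝ) ≤ 8 * Real.sqrt s * ((s:ℝ) + 1) * (catalan r * catalan s) :=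
        hchain
      _ ≤ C * ((k:ℝ) * Real.sqrt k) * (catalan r * catalan s) :=
          mul_le_mul_of_nonneg_right hnum (by positivity)
end

section
/- For any permutation σ ∈ S_k, the number of monotone factorizations of σ of length |σ| equals ∏_{i=1}^{ℓ(μ)} Cat(μ_i − 1), where μ is the cycle type of σ and Cat is the Catalan number. -/
/-- `L` is a monotone factorization of `σ ∈ S_k`: a list of pairs `(s_i, t_i)`
with `s_i < t_i`, weakly decreasing maxima `t_1 ≥ t_2 ≥ …`, whose associated
transpositions multiply to `σ`. -/
def IsMonotoneFactorization {k : ℕ} (σ : Equiv.Perm (Fin k)) (L : List (Fin k × Fin k)) : Prop :=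
  (∀ p ∈ L, p.1 < p.2) ∧ L.Pairwise (fun p q => q.2 ≤ p.2) ∧
    (L.map fun p => Equiv.swap p.1 p.2).prod = σ

/-- The number of monotone factorizations of `σ` of length `l`. -/
noncomputable def numMF {k : ℕ} (σ : Equiv.Perm (Fin k)) (l : ℕ) : ℕ :=
  Set.ncard {L : List (Fin k × Fin k) | L.length = l ∧ IsMonotoneFactorization σ L}

/-- `|σ| = k - (number of cycles of σ, including fixed points)`. -/
def permLength {k : ℕ} (σ : Equiv.Perm (Fin k)) : ℕ :=
  σ.cycleType.sum - Multiset.card σ.cycleType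

set_option linter.unusedSectionVars false

namespace MF

open Equiv Equiv.Perm Finset

variable {α : Type*} [Fintype α] [LinearOrder α]

/-- The orbit of `x` under `σ` as a finset. -/
def orbitF (σ : Perm α) (x : α) : Finset α := Finset.univ.filter fun y => σ.SameCycle x y

lemma mem_orbitF {σ : Perm α} {x y : α} : y ∈ orbitF σ x ↔ σ.SameCycle x y := by
  simp [orbitF]

lemma self_mem_orbitF (σ : Perm α) (x : α) : x ∈ orbitF σ x :=
  mem_orbitF.2 (Equiv.Perm.SameCycle.refl σ x)

lemma sameCycle_iff_nat {σ : Perm α} {x y : α} :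
    σ.SameCycle x y ↔ ∃ n : ℕ, (σ ^ n) x = y := by
  constructor
  · intro h
    obtain ⟨i, _, hi⟩ := h.exists_pow_eq'
    exact ⟨i, hi⟩
  · rintro ⟨n, rfl⟩
    exact ⟨n, by rw [zpow_natCast]⟩

lemma orbitF_eq_of_mem {σ : Perm α} {x y : α} (h : y ∈ orbitF σ x) :
    orbitF σ y = orbitF σ x := by
  ext z
  rw [mem_orbitF] at h ⊢
  rw [mem_orbitF]
  exact ⟨fun hz => h.trans hz, fun hz => h.symm.trans hz⟩

lemma orbitF_nonempty (σ : Perm α) (x : α) : (orbitF σ x).Nonempty :=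
  ⟨x, self_mem_orbitF σ x⟩

lemma orbitF_eq_singleton_of_fixed {σ : Perm α} {x : α} (h : σ x = x) :
    orbitF σ x = {x} := by
  ext y
  simp only [mem_orbitF, mem_singleton]
  constructor
  · intro hy
    obtain ⟨n, rfl⟩ := sameCycle_iff_nat.1 hy
    rw [pow_apply_eq_self_of_apply_eq_self h]
  · rintro rfl; exact Equiv.Perm.SameCycle.refl σ y

lemma mem_support_of_sameCycle {σ : Perm α} {x y : α} (h : σ.SameCycle x y) (hxy : x ≠ y) :
    x ∈ σ.support := by
  by_contra hx
  rw [Equiv.Perm.notMem_support] at hx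
  have := orbitF_eq_singleton_of_fixed hx ▸ mem_orbitF.2 h
  simp only [mem_singleton] at this
  exact hxy this.symm

lemma orbitF_eq_support_cycleOf {σ : Perm α} {x : α} (hx : x ∈ σ.support) :
    orbitF σ x = (σ.cycleOf x).support := by
  ext y
  rw [mem_orbitF, Equiv.Perm.mem_support_cycleOf_iff]
  exact ⟨fun h => ⟨h, hx⟩, fun h => h.1⟩

/-- The set of points which are the largest in their orbit. -/
def maxPts (σ : Perm α) : Finset α := Finset.univ.filter fun x => ∀ y ∈ orbitF σ x, y ≤ x

lemma mem_maxPts {σ : Perm α} {x : α} : x ∈ maxPts σ ↔ ∀ y ∈ orbitF σ x, y ≤ x := by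
  simp [maxPts]

lemma maxPts_inter_orbitF (σ : Perm α) (a : α) :
    maxPts σ ∩ orbitF σ a = {(orbitF σ a).max' (orbitF_nonempty σ a)} := by
  ext x
  simp only [mem_inter, mem_singleton, mem_maxPts]
  constructor
  · rintro ⟨hmax, hmem⟩
    have horb : orbitF σ x = orbitF σ a := orbitF_eq_of_mem hmem
    apply le_antisymm
    · exact Finset.le_max' _ _ hmem
    · refine hmax _ ?_
      rw [horb]
      exact Finset.max'_mem _ _
  · rintro rfl
    refine ⟨?_, Finset.max'_mem _ _⟩
    intro y hy
    rw [orbitF_eq_of_mem (Finset.max'_mem _ (orbitF_nonempty σ a))] at hy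
    exact Finset.le_max' _ _ hy

lemma fixed_mem_maxPts {σ : Perm α} {x : α} (h : x ∉ σ.support) : x ∈ maxPts σ := by
  rw [Equiv.Perm.notMem_support] at h
  rw [mem_maxPts, orbitF_eq_singleton_of_fixed h]
  simp

lemma injOn_cycleOf (σ : Perm α) :
    Set.InjOn σ.cycleOf ↑(maxPts σ ∩ σ.support) := by
  intro x hx y hy h
  simp only [coe_inter, Set.mem_inter_iff, mem_coe, mem_maxPts] at hx hy
  have hox : orbitF σ x = (σ.cycleOf x).support := orbitF_eq_support_cycleOf hx.2
  have hoy : orbitF σ y = (σ.cycleOf y).support := orbitF_eq_support_cycleOf hy.2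
  have horb : orbitF σ x = orbitF σ y := by rw [hox, hoy, h]
  have h1 : x ≤ y := hy.1 x (by rw [← horb]; exact self_mem_orbitF σ x)
  have h2 : y ≤ x := hx.1 y (by rw [horb]; exact self_mem_orbitF σ y)
  exact le_antisymm h1 h2

lemma image_cycleOf_eq (σ : Perm α) :
    (maxPts σ ∩ σ.support).image σ.cycleOf = σ.cycleFactorsFinset := by
  ext c
  simp only [mem_image]
  constructor
  · rintro ⟨x, hx, rfl⟩
    simp only [mem_inter] at hx
    exact Equiv.Perm.cycleOf_mem_cycleFactorsFinset_iff.2 hx.2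
  · intro hc
    have hcyc : c.IsCycle := (Equiv.Perm.mem_cycleFactorsFinset_iff.1 hc).1
    have hne : c.support.Nonempty := by
      rw [Finset.nonempty_iff_ne_empty, Ne, Equiv.Perm.support_eq_empty_iff]
      exact hcyc.ne_one
    set a := c.support.max' hne with ha
    have ham : a ∈ c.support := Finset.max'_mem _ _
    have hceq : c = σ.cycleOf a := Equiv.Perm.cycle_is_cycleOf ham hc
    have hasupp : a ∈ σ.support := Equiv.Perm.mem_cycleFactorsFinset_support_le hc ham
    refine ⟨a, ?_, hceq.symm⟩
    simp only [mem_inter, mem_maxPts]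
    refine ⟨fun y hy => ?_, hasupp⟩
    rw [orbitF_eq_support_cycleOf hasupp, ← hceq] at hy
    exact Finset.le_max' _ _ hy

lemma card_maxPts_inter_support (σ : Perm α) :
    (maxPts σ ∩ σ.support).card = σ.cycleFactorsFinset.card := by
  rw [← image_cycleOf_eq σ, Finset.card_image_of_injOn (injOn_cycleOf σ)]

lemma maxPts_card_add (σ : Perm α) :
    (maxPts σ).card + σ.support.card = σ.cycleFactorsFinset.card + Fintype.card α := by
  have h1 : maxPts σ = (maxPts σ ∩ σ.support) ∪ σ.supportᶜ := by
    ext x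
    simp only [mem_union, mem_inter, mem_compl]
    constructor
    · intro hx
      by_cases h : x ∈ σ.support
      · exact Or.inl ⟨hx, h⟩
      · exact Or.inr h
    · rintro (⟨h, _⟩ | h)
      · exact h
      · exact fixed_mem_maxPts h
  have h2 : Disjoint (maxPts σ ∩ σ.support) σ.supportᶜ := by
    exact Disjoint.mono_left inter_subset_right disjoint_compl_right
  rw [h1, Finset.card_union_of_disjoint h2, card_maxPts_inter_support,
    Finset.card_compl]
  have := Finset.card_le_univ σ.support
  omega

/-- `plen` is the general version of `permLength`. -/
def plen (σ : Perm α) : ℕ := σ.cycleType.sum - Multiset.card σ.cycleType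

lemma card_cycleType_eq (σ : Perm α) :
    Multiset.card σ.cycleType = σ.cycleFactorsFinset.card := by
  rw [Equiv.Perm.cycleType_def, Multiset.card_map]; rfl

lemma two_mul_card_cycleType_le (σ : Perm α) :
    2 * Multiset.card σ.cycleType ≤ σ.cycleType.sum := by
  rw [two_mul]
  calc Multiset.card σ.cycleType + Multiset.card σ.cycleType
      = Multiset.card σ.cycleType • 2 := by rw [smul_eq_mul]; omega
    _ ≤ σ.cycleType.sum := Multiset.card_nsmul_le_sum fun x hx =>
        Equiv.Perm.two_le_of_mem_cycleType hx

lemma plen_eq (σ : Perm α) : plen σ = Fintype.card α - (maxPts σ).card := by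
  have h1 := maxPts_card_add σ
  have h2 := Equiv.Perm.sum_cycleType σ
  have h3 := card_cycleType_eq σ
  have h4 := two_mul_card_cycleType_le σ
  have h5 := Finset.card_le_univ σ.support
  unfold plen
  omega

lemma maxPts_card_le (σ : Perm α) : (maxPts σ).card ≤ Fintype.card α :=
  Finset.card_le_univ _

lemma cff_card_le (σ : Perm α) : 2 * σ.cycleFactorsFinset.card ≤ σ.support.card := by
  have := two_mul_card_cycleType_le σ
  rw [card_cycleType_eq, Equiv.Perm.sum_cycleType] at this
  exact this

lemma plen_eq_zero_iff {σ : Perm α} : plen σ = 0 ↔ σ = 1 := by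
  unfold plen
  have h4 := two_mul_card_cycleType_le σ
  constructor
  · intro h
    have : Multiset.card σ.cycleType = 0 := by omega
    exact Equiv.Perm.card_cycleType_eq_zero.1 this
  · rintro rfl
    simp [Equiv.Perm.cycleType_one]

/-- The product of Catalan numbers over cycles, as a product over orbit maxima. -/
def R (σ : Perm α) : ℕ := ∏ x ∈ maxPts σ, catalan ((orbitF σ x).card - 1)

lemma R_eq_cycleType_prod (σ : Perm α) :
    (σ.cycleType.map fun m => catalan (m - 1)).prod = R σ := by
  have h1 : (σ.cycleType.map fun m => catalan (m - 1)).prod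
      = ∏ c ∈ σ.cycleFactorsFinset, catalan (c.support.card - 1) := by
    rw [Equiv.Perm.cycleType_def, Multiset.map_map, Finset.prod_eq_multiset_prod]
    rfl
  rw [h1, ← image_cycleOf_eq σ, Finset.prod_image (fun x hx y hy h => injOn_cycleOf σ hx hy h)]
  unfold R
  rw [← Finset.prod_subset (inter_subset_left : maxPts σ ∩ σ.support ⊆ maxPts σ)]
  · exact Finset.prod_congr rfl fun x hx => by
      rw [← orbitF_eq_support_cycleOf (mem_inter.1 hx).2]
  · intro x hx hx'
    have hxs : x ∉ σ.support := fun h => hx' (mem_inter.2 ⟨hx, h⟩)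
    rw [Equiv.Perm.notMem_support] at hxs
    rw [orbitF_eq_singleton_of_fixed hxs]
    simp

lemma mem_orbitF_comm {σ : Perm α} {x y : α} : y ∈ orbitF σ x ↔ x ∈ orbitF σ y := by
  rw [mem_orbitF, mem_orbitF]
  exact ⟨Equiv.Perm.SameCycle.symm, Equiv.Perm.SameCycle.symm⟩

lemma walk_pow {σ : Perm α} {a b y : α} (ha : ¬ σ.SameCycle a y) (hb : ¬ σ.SameCycle b y) :
    ∀ n : ℕ, ((swap a b * σ) ^ n) y = (σ ^ n) y := by
  intro n
  induction n with
  | zero => simp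
  | succ n ih =>
    rw [pow_succ', pow_succ', Equiv.Perm.mul_apply, Equiv.Perm.mul_apply, ih,
      Equiv.Perm.mul_apply]
    have h1 : σ ((σ ^ n) y) ≠ a := by
      intro h
      exact ha (Equiv.Perm.SameCycle.symm (sameCycle_iff_nat.2 ⟨n + 1, by
        rw [pow_succ', Equiv.Perm.mul_apply]; exact h⟩))
    have h2 : σ ((σ ^ n) y) ≠ b := by
      intro h
      exact hb (Equiv.Perm.SameCycle.symm (sameCycle_iff_nat.2 ⟨n + 1, by
        rw [pow_succ', Equiv.Perm.mul_apply]; exact h⟩))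
    rw [swap_apply_of_ne_of_ne h1 h2]

lemma orbitF_walk {σ : Perm α} {a b y : α} (ha : y ∉ orbitF σ a) (hb : y ∉ orbitF σ b) :
    orbitF (swap a b * σ) y = orbitF σ y := by
  rw [mem_orbitF] at ha hb
  ext z
  rw [mem_orbitF, mem_orbitF, sameCycle_iff_nat, sameCycle_iff_nat]
  constructor
  · rintro ⟨n, rfl⟩; exact ⟨n, (walk_pow ha hb n).symm⟩
  · rintro ⟨n, rfl⟩; exact ⟨n, walk_pow ha hb n⟩

lemma swap_mul_swap_mul (a b : α) (σ : Perm α) : swap a b * (swap a b * σ) = σ := by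
  rw [← mul_assoc, Equiv.swap_mul_self, one_mul]

lemma orbitF_union_walk (σ : Perm α) (a b : α) :
    orbitF σ a ∪ orbitF σ b = orbitF (swap a b * σ) a ∪ orbitF (swap a b * σ) b := by
  ext y
  rw [mem_union, mem_union, mem_orbitF_comm, @mem_orbitF_comm _ _ _ σ b,
    @mem_orbitF_comm _ _ _ (swap a b * σ) a, @mem_orbitF_comm _ _ _ (swap a b * σ) b]
  constructor
  · intro h
    by_contra h'
    push_neg at h'
    have hw : orbitF (swap a b * (swap a b * σ)) y = orbitF (swap a b * σ) y :=
      orbitF_walk (fun hc => h'.1 (mem_orbitF_comm.1 hc))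
        (fun hc => h'.2 (mem_orbitF_comm.1 hc))
    rw [swap_mul_swap_mul] at hw
    rw [← hw] at h'
    rcases h with h | h
    · exact h'.1 h
    · exact h'.2 h
  · intro h
    by_contra h'
    push_neg at h'
    have hw : orbitF (swap a b * σ) y = orbitF σ y :=
      orbitF_walk (fun hc => h'.1 (mem_orbitF_comm.1 hc))
        (fun hc => h'.2 (mem_orbitF_comm.1 hc))
    rw [← hw] at h'
    rcases h with h | h
    · exact h'.1 h
    · exact h'.2 h

lemma disjoint_orbitF {σ : Perm α} {a b : α} (h : ¬ σ.SameCycle a b) :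
    Disjoint (orbitF σ a) (orbitF σ b) := by
  rw [Finset.disjoint_left]
  intro z hza hzb
  exact h ((mem_orbitF.1 hza).trans (mem_orbitF.1 hzb).symm)

lemma card_maxPts_inter_union (σ : Perm α) (a b : α) :
    (maxPts σ ∩ (orbitF σ a ∪ orbitF σ b)).card = if σ.SameCycle a b then 1 else 2 := by
  by_cases h : σ.SameCycle a b
  · rw [if_pos h]
    have hb : orbitF σ b = orbitF σ a := orbitF_eq_of_mem (mem_orbitF.2 h)
    rw [hb, Finset.union_self, maxPts_inter_orbitF]
    simp
  · rw [if_neg h, Finset.inter_union_distrib_left, maxPts_inter_orbitF, maxPts_inter_orbitF]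
    rw [Finset.card_union_of_disjoint, Finset.card_singleton, Finset.card_singleton]
    rw [Finset.disjoint_singleton]
    intro hcontra
    have h1 : (orbitF σ a).max' (orbitF_nonempty σ a) ∈ orbitF σ a := Finset.max'_mem _ _
    have h2 : (orbitF σ b).max' (orbitF_nonempty σ b) ∈ orbitF σ b := Finset.max'_mem _ _
    rw [hcontra] at h1
    exact (Finset.disjoint_left.1 (disjoint_orbitF h)) h1 h2

lemma maxPts_mem_walk {σ : Perm α} {a b x : α} (hx : x ∉ orbitF σ a ∪ orbitF σ b) :
    (x ∈ maxPts (swap a b * σ) ↔ x ∈ maxPts σ) := by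
  rw [mem_union] at hx
  push_neg at hx
  rw [mem_maxPts, mem_maxPts, orbitF_walk hx.1 hx.2]

lemma neg_one_pow_parity {p q : ℕ} (h : ((-1 : ℤˣ)) ^ p = -(-1 : ℤˣ) ^ q) :
    p % 2 ≠ q % 2 := by
  intro hpq
  have hsame : ((-1 : ℤˣ)) ^ p = (-1 : ℤˣ) ^ q := by
    rcases Nat.even_or_odd p with hp | hp
    · have hq : Even q := by rw [Nat.even_iff] at hp ⊢; omega
      rw [hp.neg_one_pow, hq.neg_one_pow]
    · have hq : Odd q := by rw [Nat.odd_iff] at hp ⊢; omega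
      rw [hp.neg_one_pow, hq.neg_one_pow]
  rw [hsame] at h
  rcases Nat.even_or_odd q with hq | hq
  · rw [hq.neg_one_pow] at h; exact absurd h (by decide)
  · rw [hq.neg_one_pow] at h; exact absurd h (by decide)

lemma maxPts_parity_swap {a b : α} (hab : a ≠ b) (σ : Perm α) :
    (maxPts (swap a b * σ)).card % 2 ≠ (maxPts σ).card % 2 := by
  have hsign : Equiv.Perm.sign (swap a b * σ) = - Equiv.Perm.sign σ := by
    rw [Equiv.Perm.sign_mul, Equiv.Perm.sign_swap hab, neg_one_mul]
  rw [Equiv.Perm.sign_of_cycleType (swap a b * σ), Equiv.Perm.sign_of_cycleType σ] at hsign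
  have hp := neg_one_pow_parity hsign
  have e1 := maxPts_card_add (swap a b * σ)
  have e2 := maxPts_card_add σ
  have e3 := Equiv.Perm.sum_cycleType (swap a b * σ)
  have e4 := Equiv.Perm.sum_cycleType σ
  have e5 := card_cycleType_eq (swap a b * σ)
  have e6 := card_cycleType_eq σ
  omega

lemma split_card {a b : α} (hab : a ≠ b) {σ : Perm α} (h : σ.SameCycle a b) :
    (maxPts (swap a b * σ)).card = (maxPts σ).card + 1 ∧
      ¬ (swap a b * σ).SameCycle a b := by
  set σ' := swap a b * σ with hσ'
  set U := orbitF σ a ∪ orbitF σ b with hU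
  have hsd : maxPts σ' \ U = maxPts σ \ U := by
    ext x
    simp only [mem_sdiff]
    exact and_congr_left fun hx => maxPts_mem_walk hx
  have d1 : (maxPts σ' \ U).card + (maxPts σ' ∩ U).card = (maxPts σ').card :=
    Finset.card_sdiff_add_card_inter _ _
  have d2 : (maxPts σ \ U).card + (maxPts σ ∩ U).card = (maxPts σ).card :=
    Finset.card_sdiff_add_card_inter _ _
  have c2 : (maxPts σ ∩ U).card = 1 := by
    rw [hU, card_maxPts_inter_union σ a b, if_pos h]
  have c1 : (maxPts σ' ∩ U).card = if σ'.SameCycle a b then 1 else 2 := by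
    rw [hU, orbitF_union_walk σ a b, ← hσ']
    exact card_maxPts_inter_union σ' a b
  have hpar := maxPts_parity_swap hab σ
  rw [← hσ'] at hpar
  rw [hsd] at d1
  by_cases h' : σ'.SameCycle a b
  · rw [if_pos h'] at c1; omega
  · rw [if_neg h'] at c1
    exact ⟨by omega, h'⟩

lemma merge_card {a b : α} (hab : a ≠ b) {σ : Perm α} (h : ¬ σ.SameCycle a b) :
    (maxPts (swap a b * σ)).card + 1 = (maxPts σ).card := by
  set σ' := swap a b * σ with hσ'
  set U := orbitF σ a ∪ orbitF σ b with hU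
  have hsd : maxPts σ' \ U = maxPts σ \ U := by
    ext x
    simp only [mem_sdiff]
    exact and_congr_left fun hx => maxPts_mem_walk hx
  have d1 : (maxPts σ' \ U).card + (maxPts σ' ∩ U).card = (maxPts σ').card :=
    Finset.card_sdiff_add_card_inter _ _
  have d2 : (maxPts σ \ U).card + (maxPts σ ∩ U).card = (maxPts σ).card :=
    Finset.card_sdiff_add_card_inter _ _
  have c2 : (maxPts σ ∩ U).card = 2 := by
    rw [hU, card_maxPts_inter_union σ a b, if_neg h]
  have c1 : (maxPts σ' ∩ U).card = if σ'.SameCycle a b then 1 else 2 := by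
    rw [hU, orbitF_union_walk σ a b, ← hσ']
    exact card_maxPts_inter_union σ' a b
  have hpar := maxPts_parity_swap hab σ
  rw [← hσ'] at hpar
  rw [hsd] at d1
  by_cases h' : σ'.SameCycle a b
  · rw [if_pos h'] at c1; omega
  · rw [if_neg h'] at c1; omega

lemma plen_swap_mul_of_sameCycle {a b : α} (hab : a ≠ b) {σ : Perm α}
    (h : σ.SameCycle a b) : plen (swap a b * σ) + 1 = plen σ := by
  have h1 := (split_card hab h).1
  have h2 := maxPts_card_le (swap a b * σ)
  have h3 := maxPts_card_le σ
  rw [plen_eq, plen_eq]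
  omega

lemma plen_swap_mul_of_not {a b : α} (hab : a ≠ b) {σ : Perm α}
    (h : ¬ σ.SameCycle a b) : plen (swap a b * σ) = plen σ + 1 := by
  have h1 := merge_card hab h
  have h2 := maxPts_card_le (swap a b * σ)
  have h3 := maxPts_card_le σ
  rw [plen_eq, plen_eq]
  omega

lemma plen_one : plen (1 : Perm α) = 0 := plen_eq_zero_iff.2 rfl

lemma plen_swap_mul_le (a b : α) (σ : Perm α) : plen (swap a b * σ) ≤ plen σ + 1 := by
  by_cases hab : a = b
  · subst hab
    rw [Equiv.swap_self]
    rw [show (Equiv.refl α : Perm α) * σ = σ from one_mul σ]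
    omega
  · by_cases h : σ.SameCycle a b
    · have := plen_swap_mul_of_sameCycle hab h; omega
    · have := plen_swap_mul_of_not hab h; omega

lemma plen_prod_le (L : List (α × α)) :
    plen (L.map fun p => swap p.1 p.2).prod ≤ L.length := by
  induction L with
  | nil =>
    simp only [List.map_nil, List.prod_nil, List.length_nil]
    exact le_of_eq plen_one
  | cons p L ih =>
    rw [List.map_cons, List.prod_cons, List.length_cons]
    exact le_trans (plen_swap_mul_le p.1 p.2 _) (by omega)

lemma support_swap_mul_subset {a b : α} {σ : Perm α}
    (ha : a ∈ σ.support) (hb : b ∈ σ.support) :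
    (swap a b * σ).support ⊆ σ.support := by
  intro x hx
  by_contra hxs
  rw [Equiv.Perm.notMem_support] at hxs
  rw [Equiv.Perm.mem_support] at hx
  apply hx
  rw [Equiv.Perm.mul_apply, hxs, swap_apply_of_ne_of_ne]
  · rintro rfl
    rw [Equiv.Perm.mem_support] at ha
    exact ha hxs
  · rintro rfl
    rw [Equiv.Perm.mem_support] at hb
    exact hb hxs

lemma factor_head {σ : Perm α} {q : α × α} {L : List (α × α)}
    (hq : q.1 ≠ q.2)
    (hlen : (q :: L).length = plen σ)
    (hprod : (((q :: L)).map fun p => swap p.1 p.2).prod = σ) :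
    σ.SameCycle q.1 q.2 ∧ (L.map fun p => swap p.1 p.2).prod = swap q.1 q.2 * σ ∧
      L.length = plen (swap q.1 q.2 * σ) := by
  rw [List.map_cons, List.prod_cons] at hprod
  set π := (L.map fun p => swap p.1 p.2).prod with hπ
  have hπσ : π = swap q.1 q.2 * σ := by rw [← hprod, swap_mul_swap_mul]
  have hsub : plen π ≤ L.length := plen_prod_le L
  rw [List.length_cons] at hlen
  have hsc : σ.SameCycle q.1 q.2 := by
    by_contra hsc
    have := plen_swap_mul_of_not hq hsc
    rw [← hπσ] at this
    omega
  have hplenπ : plen π + 1 = plen σ := by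
    rw [hπσ]; exact plen_swap_mul_of_sameCycle hq hsc
  refine ⟨hsc, hπσ, ?_⟩
  rw [← hπσ]
  omega

lemma factor_support {σ : Perm α} {L : List (α × α)} (hlen : L.length = plen σ)
    (hprod : (L.map fun p => swap p.1 p.2).prod = σ) (hne : ∀ p ∈ L, p.1 ≠ p.2) :
    ∀ p ∈ L, p.1 ∈ σ.support ∧ p.2 ∈ σ.support := by
  induction L generalizing σ with
  | nil => simp
  | cons q L ih =>
    have hq : q.1 ≠ q.2 := hne q List.mem_cons_self
    obtain ⟨hsc, hπσ, hlenL⟩ := factor_head hq hlen hprod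
    have h1 : q.1 ∈ σ.support := mem_support_of_sameCycle hsc hq
    have h2 : q.2 ∈ σ.support := mem_support_of_sameCycle hsc.symm (Ne.symm hq)
    intro p hp
    rcases List.mem_cons.1 hp with rfl | hp
    · exact ⟨h1, h2⟩
    · have hmem := ih (σ := swap q.1 q.2 * σ) (by rw [hlenL]) hπσ
        (fun p hp => hne p (List.mem_cons_of_mem _ hp)) p hp
      have hss : (swap q.1 q.2 * σ).support ⊆ σ.support := support_swap_mul_subset h1 h2
      exact ⟨hss hmem.1, hss hmem.2⟩

section Enum

variable {σ : Perm α} {M : α}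

lemma isCycleOn_orbitF (hM : M ∈ σ.support) : σ.IsCycleOn ↑(orbitF σ M) := by
  rw [orbitF_eq_support_cycleOf hM]
  exact σ.isCycleOn_support_cycleOf M

lemma pow_card_orbitF (hM : M ∈ σ.support) : (σ ^ (orbitF σ M).card) M = M :=
  (isCycleOn_orbitF hM).pow_card_apply (self_mem_orbitF σ M)

lemma exists_pow_orbitF (hM : M ∈ σ.support) {y : α} (hy : y ∈ orbitF σ M) :
    ∃ j < (orbitF σ M).card, (σ ^ j) M = y :=
  (isCycleOn_orbitF hM).exists_pow_eq (self_mem_orbitF σ M) hy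

lemma pow_injOn_orbitF (hM : M ∈ σ.support) {i j : ℕ}
    (hi : i < (orbitF σ M).card) (hj : j < (orbitF σ M).card)
    (h : (σ ^ i) M = (σ ^ j) M) : i = j := by
  have := ((isCycleOn_orbitF hM).pow_apply_eq_pow_apply (self_mem_orbitF σ M)).1 h
  rw [Nat.ModEq] at this
  rwa [Nat.mod_eq_of_lt hi, Nat.mod_eq_of_lt hj] at this

lemma pow_mem_orbitF (σ : Perm α) (M : α) (j : ℕ) : (σ ^ j) M ∈ orbitF σ M :=
  mem_orbitF.2 (sameCycle_iff_nat.2 ⟨j, rfl⟩)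

lemma orbit_split (hM : M ∈ σ.support) {j : ℕ} (hj1 : 1 ≤ j)
    (hjm : j < (orbitF σ M).card) :
    orbitF (swap ((σ ^ j) M) M * σ) M = (Finset.range j).image (fun i => (σ ^ i) M) := by
  set m := (orbitF σ M).card with hm
  set s := (σ ^ j) M with hs
  set σ' := swap s M * σ with hσ'
  have hMne : ∀ i, 0 < i → i < m → (σ ^ i) M ≠ M := by
    intro i hi0 him hcon
    have : i = 0 := pow_injOn_orbitF hM him (by
      have := Finset.card_pos.2 (orbitF_nonempty σ M); omega) (by simpa using hcon)
    omega
  have hsne : ∀ i, i < m → i ≠ j → (σ ^ i) M ≠ s := by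
    intro i him hij hcon
    exact hij (pow_injOn_orbitF hM him hjm hcon)
  have step1 : ∀ i, i < j → (σ' ^ i) M = (σ ^ i) M := by
    intro i hi
    induction i with
    | zero => simp
    | succ i ih =>
      rw [pow_succ', Equiv.Perm.mul_apply, ih (by omega), hσ', Equiv.Perm.mul_apply,
        ← Equiv.Perm.mul_apply σ, ← pow_succ']
      exact swap_apply_of_ne_of_ne (hsne (i + 1) (by omega) (by omega))
        (hMne (i + 1) (by omega) (by omega))
  have step2 : (σ' ^ j) M = M := by
    obtain ⟨i, rfl⟩ : ∃ i, j = i + 1 := ⟨j - 1, by omega⟩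
    rw [pow_succ', Equiv.Perm.mul_apply, step1 i (by omega), hσ', Equiv.Perm.mul_apply,
      ← Equiv.Perm.mul_apply σ, ← pow_succ', ← hs]
    exact swap_apply_left s M
  ext y
  rw [mem_orbitF, sameCycle_iff_nat, Finset.mem_image]
  constructor
  · rintro ⟨n, rfl⟩
    induction n using Nat.strong_induction_on with
    | _ n ihn =>
      by_cases hn : n < j
      · exact ⟨n, Finset.mem_range.2 hn, (step1 n hn).symm⟩
      · have hnj : n - j < n := by omega
        have : (σ' ^ n) M = (σ' ^ (n - j)) M := by
          conv_lhs => rw [show n = (n - j) + j by omega]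
          rw [pow_add, Equiv.Perm.mul_apply, step2]
        rw [this]
        exact ihn (n - j) hnj
  · rintro ⟨i, hi, rfl⟩
    exact ⟨i, step1 i (Finset.mem_range.1 hi)⟩

lemma orbit_split_card (hM : M ∈ σ.support) {j : ℕ} (hj1 : 1 ≤ j)
    (hjm : j < (orbitF σ M).card) :
    (orbitF (swap ((σ ^ j) M) M * σ) M).card = j := by
  rw [orbit_split hM hj1 hjm,
    Finset.card_image_of_injOn (fun i hi i' hi' h =>
      pow_injOn_orbitF hM (lt_trans (Finset.mem_range.1 hi) hjm)
        (lt_trans (Finset.mem_range.1 hi') hjm) h),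
    Finset.card_range]

lemma sameCycle_pow (σ : Perm α) (M : α) (j : ℕ) : σ.SameCycle ((σ ^ j) M) M :=
  (sameCycle_iff_nat.2 ⟨j, rfl⟩).symm

/-- In the split situation, the second orbit has the complementary size. -/
lemma orbit_split_card' (hM : M ∈ σ.support) {j : ℕ} (hj1 : 1 ≤ j)
    (hjm : j < (orbitF σ M).card) :
    (orbitF (swap ((σ ^ j) M) M * σ) ((σ ^ j) M)).card = (orbitF σ M).card - j := by
  set s := (σ ^ j) M with hs
  set σ' := swap s M * σ with hσ'
  have hsM : s ≠ M := by
    intro hcon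
    have : j = 0 := pow_injOn_orbitF hM hjm
      (Finset.card_pos.2 (orbitF_nonempty σ M)) (by simpa using hcon)
    omega
  have hsc : σ.SameCycle s M := sameCycle_pow σ M j
  have hdisj : Disjoint (orbitF σ' s) (orbitF σ' M) :=
    disjoint_orbitF (split_card hsM hsc).2
  have hunion : orbitF σ' s ∪ orbitF σ' M = orbitF σ M := by
    have h1 := orbitF_union_walk σ s M
    have h2 : orbitF σ s = orbitF σ M := orbitF_eq_of_mem (pow_mem_orbitF σ M j)
    rw [h2, Finset.union_self] at h1
    rw [← hσ'] at h1
    exact h1.symm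
  have hcard : (orbitF σ' s).card + (orbitF σ' M).card = (orbitF σ M).card := by
    rw [← Finset.card_union_of_disjoint hdisj, hunion]
  rw [orbit_split_card hM hj1 hjm] at hcard
  omega

end Enum

lemma R_eq_P {σ : Perm α} {M : α} :
    R σ = (∏ x ∈ maxPts σ \ orbitF σ M, catalan ((orbitF σ x).card - 1)) *
      catalan ((orbitF σ M).card - 1) := by
  unfold R
  conv_lhs => rw [← Finset.sdiff_union_inter (maxPts σ) (orbitF σ M)]
  rw [Finset.prod_union (Finset.disjoint_sdiff_inter _ _)]
  congr 1
  rw [maxPts_inter_orbitF σ M, Finset.prod_singleton,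
    orbitF_eq_of_mem (Finset.max'_mem _ (orbitF_nonempty σ M))]

lemma R_split {σ : Perm α} {M : α} (hM : M ∈ σ.support) {j : ℕ}
    (hj1 : 1 ≤ j) (hjm : j < (orbitF σ M).card) :
    R (swap ((σ ^ j) M) M * σ) =
      (∏ x ∈ maxPts σ \ orbitF σ M, catalan ((orbitF σ x).card - 1)) *
        (catalan (j - 1) * catalan ((orbitF σ M).card - j - 1)) := by
  set U := orbitF σ M with hU
  set s := (σ ^ j) M with hs
  set σ' := swap s M * σ with hσ'
  have hsM : s ≠ M := by
    intro hcon
    have : j = 0 := pow_injOn_orbitF hM hjm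
      (Finset.card_pos.2 (orbitF_nonempty σ M)) (by rw [hs] at hcon; simpa using hcon)
    omega
  have hsc : σ.SameCycle s M := sameCycle_pow σ M j
  have hsplit := (split_card hsM hsc).2
  have horbs : orbitF σ s = U := orbitF_eq_of_mem (pow_mem_orbitF σ M j)
  have hdisj : Disjoint (orbitF σ' s) (orbitF σ' M) := disjoint_orbitF hsplit
  have hunion : orbitF σ' s ∪ orbitF σ' M = U := by
    have h1 := orbitF_union_walk σ s M
    rw [horbs, hU, Finset.union_self, ← hσ'] at h1
    exact h1.symm
  have hcA : (orbitF σ' M).card = j := orbit_split_card hM hj1 hjm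
  have hcB : (orbitF σ' s).card = U.card - j := orbit_split_card' hM hj1 hjm
  unfold R
  rw [← Finset.sdiff_union_inter (maxPts σ') U,
    Finset.prod_union (Finset.disjoint_sdiff_inter _ _)]
  have hsd : maxPts σ' \ U = maxPts σ \ U := by
    ext x
    simp only [mem_sdiff]
    refine and_congr_left fun hx => ?_
    rw [hσ']
    exact maxPts_mem_walk (by rw [mem_union, horbs]; tauto)
  congr 1
  · rw [hsd]
    apply Finset.prod_congr rfl
    intro x hx
    rw [mem_sdiff] at hx
    rw [hσ', orbitF_walk (by rw [horbs]; exact hx.2) hx.2]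
  · -- product over maxPts σ' ∩ U
    have hiU : maxPts σ' ∩ U = (maxPts σ' ∩ orbitF σ' s) ∪ (maxPts σ' ∩ orbitF σ' M) := by
      rw [← Finset.inter_union_distrib_left, hunion]
    rw [hiU, maxPts_inter_orbitF σ' s, maxPts_inter_orbitF σ' M]
    have hb' : (orbitF σ' s).max' (orbitF_nonempty σ' s) ∈ orbitF σ' s :=
      Finset.max'_mem _ _
    have ha' : (orbitF σ' M).max' (orbitF_nonempty σ' M) ∈ orbitF σ' M :=
      Finset.max'_mem _ _
    rw [Finset.prod_union (by
      rw [Finset.disjoint_singleton]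
      intro hcon
      exact (Finset.disjoint_left.1 hdisj) (hcon ▸ hb') ha')]
    rw [Finset.prod_singleton, Finset.prod_singleton,
      orbitF_eq_of_mem hb', orbitF_eq_of_mem ha', hcA, hcB, mul_comm]

lemma catalan_conv {m : ℕ} (hm : 2 ≤ m) :
    ∑ j ∈ Finset.Ico 1 m, catalan (j - 1) * catalan (m - j - 1) = catalan (m - 1) := by
  obtain ⟨n, rfl⟩ : ∃ n, m = n + 2 := ⟨m - 2, by omega⟩
  have h1 : ∑ j ∈ Finset.Ico 1 (n + 2), catalan (j - 1) * catalan (n + 2 - j - 1)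
      = ∑ i ∈ Finset.range (n + 1), catalan i * catalan (n - i) := by
    rw [Finset.sum_Ico_eq_sum_range]
    apply Finset.sum_congr (by norm_num)
    intro i hi
    rw [show 1 + i - 1 = i by omega, show n + 2 - (1 + i) - 1 = n - i by omega]
  rw [h1, show n + 2 - 1 = n + 1 by omega, catalan_succ,
    Fin.sum_univ_eq_sum_range fun i => catalan i * catalan (n - i)]

def listsLen (β : Type*) [DecidableEq β] [Fintype β] : ℕ → Finset (List β)
  | 0 => {[]}
  | n + 1 => (Finset.univ ×ˢ listsLen β n).image fun p => p.1 :: p.2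

lemma mem_listsLen {β : Type*} [DecidableEq β] [Fintype β] {n : ℕ} {L : List β} :
    L ∈ listsLen β n ↔ L.length = n := by
  induction n generalizing L with
  | zero => simp [listsLen, List.length_eq_zero_iff]
  | succ n ih =>
    cases L with
    | nil => simp [listsLen]
    | cons a t =>
      simp only [listsLen, Finset.mem_image, Finset.mem_product, Finset.mem_univ, true_and,
        List.length_cons]
      constructor
      · rintro ⟨⟨x, T⟩, hp, heq⟩
        obtain ⟨rfl, rfl⟩ := List.cons.inj heq
        rw [ih.1 hp]
      · intro h
        exact ⟨(a, t), ih.2 (show t.length = n by omega), rfl⟩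

/-- General version of `IsMonotoneFactorization`. -/
def IMF (σ : Perm α) (L : List (α × α)) : Prop :=
  (∀ p ∈ L, p.1 < p.2) ∧ L.Pairwise (fun p q => q.2 ≤ p.2) ∧
    (L.map fun p => Equiv.swap p.1 p.2).prod = σ

instance {σ : Perm α} : DecidablePred (IMF σ) := fun L => by
  unfold IMF; infer_instance

/-- The finset of monotone factorizations of `σ` of length `l`. -/
def MFF (σ : Perm α) (l : ℕ) : Finset (List (α × α)) :=
  (listsLen (α × α) l).filter (IMF σ)

lemma mem_MFF {σ : Perm α} {l : ℕ} {L : List (α × α)} :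
    L ∈ MFF σ l ↔ L.length = l ∧ IMF σ L := by
  rw [MFF, Finset.mem_filter, mem_listsLen]

lemma prod_fix {L : List (α × α)} {M : α} (h : ∀ p ∈ L, p.1 ≠ M ∧ p.2 ≠ M) :
    ((L.map fun p => swap p.1 p.2).prod) M = M := by
  induction L with
  | nil => simp
  | cons q L ih =>
    rw [List.map_cons, List.prod_cons, Equiv.Perm.mul_apply,
      ih (fun p hp => h p (List.mem_cons_of_mem _ hp)),
      swap_apply_of_ne_of_ne (Ne.symm (h q List.mem_cons_self).1)
        (Ne.symm (h q List.mem_cons_self).2)]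

lemma MFF_decomp {σ : Perm α} (hs : σ.support.Nonempty) :
    MFF σ (plen σ) =
      ((orbitF σ (σ.support.max' hs)).erase (σ.support.max' hs)).biUnion
        (fun s => (MFF (swap s (σ.support.max' hs) * σ) (plen σ - 1)).image
          (fun L => (s, σ.support.max' hs) :: L)) := by
  set M := σ.support.max' hs with hMdef
  have hMsupp : M ∈ σ.support := Finset.max'_mem _ _
  have hMmax : ∀ y ∈ σ.support, y ≤ M := fun y hy => Finset.le_max' _ _ hy
  have hσ1 : σ ≠ 1 := by
    intro h
    rw [h, Equiv.Perm.support_one] at hMsupp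
    exact absurd hMsupp (Finset.notMem_empty M)
  have hplen0 : plen σ ≠ 0 := fun h => hσ1 (plen_eq_zero_iff.1 h)
  ext L
  simp only [Finset.mem_biUnion, Finset.mem_image, Finset.mem_erase, mem_MFF]
  constructor
  · rintro ⟨hlen, hlt, hpair, hprod⟩
    cases L with
    | nil => simp at hlen; omega
    | cons q L' =>
      obtain ⟨s, t⟩ := q
      have hq : s ≠ t := ne_of_lt (hlt (s, t) List.mem_cons_self)
      obtain ⟨hsc, hprod', hlen'⟩ := factor_head hq hlen hprod
      have hsupp := factor_support hlen hprod (fun p hp => ne_of_lt (hlt p hp))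
      have htM : t = M := by
        have hexM : ∃ p ∈ (s, t) :: L', p.1 = M ∨ p.2 = M := by
          by_contra hcon
          push_neg at hcon
          have hfix : σ M = M := by
            rw [← hprod]
            exact prod_fix (fun p hp => (hcon p hp))
          rw [Equiv.Perm.mem_support] at hMsupp
          exact hMsupp hfix
        obtain ⟨p, hp, hpM⟩ := hexM
        have hple : p.2 ≤ t := by
          rcases List.mem_cons.1 hp with heq | hp'
          · rw [heq]
          · exact (List.pairwise_cons.1 hpair).1 p hp'
        have h2 : t ≤ M := hMmax t (hsupp (s, t) List.mem_cons_self).2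
        rcases hpM with h | h
        · exact absurd (lt_of_lt_of_le (h ▸ hlt p hp) (le_trans hple h2))
            (lt_irrefl M)
        · exact le_antisymm h2 (h ▸ hple)
      subst htM
      have hpl : plen (swap s M * σ) + 1 = plen σ :=
        plen_swap_mul_of_sameCycle hq hsc
      refine ⟨s, ⟨hq, mem_orbitF.2 hsc.symm⟩, L', ⟨?_, ?_, ?_, ?_⟩, rfl⟩
      · dsimp only at hlen' ⊢
        omega
      · exact fun p hp => hlt p (List.mem_cons_of_mem _ hp)
      · exact (List.pairwise_cons.1 hpair).2
      · exact hprod'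
  · rintro ⟨s, ⟨hsne, hsorb⟩, L', ⟨hlen', hlt', hpair', hprod'⟩, rfl⟩
    have hsc : σ.SameCycle s M := (mem_orbitF.1 hsorb).symm
    have hssupp : s ∈ σ.support := mem_support_of_sameCycle hsc hsne
    have hsM : s < M := lt_of_le_of_ne (hMmax s hssupp) hsne
    have hpl : plen (swap s M * σ) + 1 = plen σ :=
      plen_swap_mul_of_sameCycle hsne hsc
    have hlen'' : L'.length = plen (swap s M * σ) := by omega
    have hsupp' := factor_support hlen'' hprod' (fun p hp => ne_of_lt (hlt' p hp))
    have hsubset : (swap s M * σ).support ⊆ σ.support :=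
      support_swap_mul_subset hssupp hMsupp
    refine ⟨by simp; omega, ?_, ?_, ?_⟩
    · intro p hp
      rcases List.mem_cons.1 hp with heq | hp'
      · rw [heq]; exact hsM
      · exact hlt' p hp'
    · rw [List.pairwise_cons]
      exact ⟨fun p hp => hMmax p.2 (hsubset (hsupp' p hp).2), hpair'⟩
    · rw [List.map_cons, List.prod_cons, hprod', swap_mul_swap_mul]

lemma MFF_card_decomp {σ : Perm α} (hs : σ.support.Nonempty) :
    (MFF σ (plen σ)).card =
      ∑ s ∈ (orbitF σ (σ.support.max' hs)).erase (σ.support.max' hs),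
        (MFF (swap s (σ.support.max' hs) * σ) (plen σ - 1)).card := by
  rw [MFF_decomp hs, Finset.card_biUnion]
  · exact Finset.sum_congr rfl fun s _ =>
      Finset.card_image_of_injective _ (fun L1 L2 h => by injection h)
  · intro x hx y hy hxy
    simp only [Function.onFun]
    rw [Finset.disjoint_left]
    rintro L hLx hLy
    rw [Finset.mem_image] at hLx hLy
    obtain ⟨L1, _, rfl⟩ := hLx
    obtain ⟨L2, _, h2⟩ := hLy
    injection h2 with h21 h22
    injection h21 with h211
    exact hxy (h211.symm)

lemma R_one : R (1 : Perm α) = 1 := by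
  unfold R
  apply Finset.prod_eq_one
  intro x _
  rw [orbitF_eq_singleton_of_fixed (Equiv.Perm.one_apply x), Finset.card_singleton]
  simp

lemma MFF_one : MFF (1 : Perm α) 0 = {[]} := by
  ext L
  rw [mem_MFF, Finset.mem_singleton, List.length_eq_zero_iff]
  constructor
  · rintro ⟨rfl, _⟩; rfl
  · rintro rfl
    exact ⟨rfl, by simp, by simp, by simp⟩

theorem MFF_card_eq_R : ∀ (n : ℕ) (σ : Perm α), plen σ = n →
    (MFF σ (plen σ)).card = R σ := by
  intro n
  induction n using Nat.strong_induction_on with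
  | _ n ih =>
    intro σ hn
    by_cases hσ : σ = 1
    · subst hσ
      rw [plen_one, MFF_one, Finset.card_singleton, R_one]
    · have hs : σ.support.Nonempty := by
        rw [Finset.nonempty_iff_ne_empty, Ne, Equiv.Perm.support_eq_empty_iff]
        exact hσ
      set M := σ.support.max' hs with hMdef
      have hMsupp : M ∈ σ.support := Finset.max'_mem _ _
      set m := (orbitF σ M).card with hmdef
      have hm2 : 2 ≤ m := by
        rw [hmdef]
        apply Finset.one_lt_card.2
        refine ⟨M, self_mem_orbitF σ M, σ M, mem_orbitF.2 ⟨1, by simp⟩, ?_⟩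
        rw [Equiv.Perm.mem_support] at hMsupp
        exact (Ne.symm hMsupp)
      rw [MFF_card_decomp hs]
      have hterm : ∀ s ∈ (orbitF σ M).erase M,
          (MFF (swap s M * σ) (plen σ - 1)).card = R (swap s M * σ) := by
        intro s hsmem
        rw [Finset.mem_erase] at hsmem
        have hsc : σ.SameCycle s M := (mem_orbitF.1 hsmem.2).symm
        have hpl : plen (swap s M * σ) + 1 = plen σ :=
          plen_swap_mul_of_sameCycle hsmem.1 hsc
        rw [show plen σ - 1 = plen (swap s M * σ) by omega]
        exact ih (plen (swap s M * σ)) (by omega) _ rfl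
      rw [Finset.sum_congr rfl hterm]
      have hbij : ∑ j ∈ Finset.Ico 1 m, R (swap ((σ ^ j) M) M * σ)
          = ∑ s ∈ (orbitF σ M).erase M, R (swap s M * σ) := by
        apply Finset.sum_bij (fun j _ => (σ ^ j) M)
        · intro j hj
          rw [Finset.mem_Ico] at hj
          rw [Finset.mem_erase]
          refine ⟨?_, pow_mem_orbitF σ M j⟩
          intro hcon
          have : j = 0 := pow_injOn_orbitF hMsupp hj.2
            (Finset.card_pos.2 (orbitF_nonempty σ M)) (by simpa using hcon)
          omega
        · intro j hj j' hj' h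
          rw [Finset.mem_Ico] at hj hj'
          exact pow_injOn_orbitF hMsupp hj.2 hj'.2 h
        · intro s hsmem
          rw [Finset.mem_erase] at hsmem
          obtain ⟨j, hjm, hjeq⟩ := exists_pow_orbitF hMsupp hsmem.2
          have hj1 : 1 ≤ j := by
            rcases Nat.eq_zero_or_pos j with rfl | h
            · simp at hjeq; exact absurd hjeq.symm hsmem.1
            · exact h
          exact ⟨j, Finset.mem_Ico.2 ⟨hj1, hjm⟩, hjeq⟩
        · intro j hj; rfl
      rw [← hbij]
      have hsplit : ∀ j ∈ Finset.Ico 1 m, R (swap ((σ ^ j) M) M * σ)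
          = (∏ x ∈ maxPts σ \ orbitF σ M, catalan ((orbitF σ x).card - 1)) *
              (catalan (j - 1) * catalan (m - j - 1)) := by
        intro j hj
        rw [Finset.mem_Ico] at hj
        exact R_split hMsupp hj.1 hj.2
      rw [Finset.sum_congr rfl hsplit, ← Finset.mul_sum, catalan_conv hm2, ← R_eq_P]

end MF

/-- The number of monotone factorizations of `σ` of minimal length `|σ|` equals
`∏_i Cat(μ_i − 1)` over the cycle type `μ` of `σ`. -/
theorem numMF_min_length {k : ℕ} (σ : Equiv.Perm (Fin k)) :
    numMF σ (permLength σ) = (σ.cycleType.map fun m => catalan (m - 1)).prod := by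
  have h1 : {L : List (Fin k × Fin k) | L.length = permLength σ ∧ IsMonotoneFactorization σ L}
      = ↑(MF.MFF σ (MF.plen σ)) := by
    ext L
    rw [Set.mem_setOf_eq, Finset.mem_coe, MF.mem_MFF]
    simp only [IsMonotoneFactorization, MF.IMF, permLength, MF.plen]
  rw [numMF, h1, Set.ncard_coe_finset, MF.MFF_card_eq_R (MF.plen σ) σ rfl,
    ← MF.R_eq_cycleType_prod]
end
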